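/- Let p be a prime with p ≠ 2. Then the ring M_2(ℤ_(p)[[x]]) of 2×2 matrices over the power series ring ℤ_(p)[[x]] is very clean. -/

import Mathlib

/-- An element `a` of a ring is *very clean* if there is an idempotent `e` commuting with `a`
such that `a - e` or `a + e` is a unit. -/
def IsVeryClean {R : Type*} [Ring R] (a : R) : Prop :=
  ∃ e : R, IsIdempotentElem e ∧ a * e = e * a ∧ (IsUnit (a - e) ∨ IsUnit (a + e))

/-- A ring is *very clean* if every element is very clean. -/
def VeryCleanRing (R : Type*) [Ring R] : Prop :=
  ∀ a : R, IsVeryClean a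

/-- An element `a` of a ring is *strongly clean* if there is an idempotent `e` commuting with `a`
such that `a - e` is a unit. -/
def IsStronglyClean {R : Type*} [Ring R] (a : R) : Prop :=
  ∃ e : R, IsIdempotentElem e ∧ a * e = e * a ∧ IsUnit (a - e)

/-- A ring is *strongly clean* if every element is strongly clean. -/
def StronglyCleanRing (R : Type*) [Ring R] : Prop :=
  ∀ a : R, IsStronglyClean a

/-- For a prime `p`, the localization `ℤ_(p)` of `ℤ` at `p`, realized as the subring of `ℚ`
consisting of all fractions `m / n` with `m, n ∈ ℤ` and `p ∤ n`. -/
def ZLoc (p : ℕ) (hp : p.Prime) : Subring ℚ where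
  carrier := {x : ℚ | ∃ m n : ℤ, ¬ ((p : ℤ) ∣ n) ∧ x = m / n}
  zero_mem' := ⟨0, 1, fun h => hp.one_lt.ne' (Nat.dvd_one.mp (by exact_mod_cast h)), by simp⟩
  one_mem' := ⟨1, 1, fun h => hp.one_lt.ne' (Nat.dvd_one.mp (by exact_mod_cast h)), by simp⟩
  add_mem' := by
    rintro x y ⟨m, n, hn, rfl⟩ ⟨m', n', hn', rfl⟩
    refine ⟨m * n' + m' * n, n * n', fun h => ?_, ?_⟩
    · rcases (Int.Prime.dvd_mul' (by exact_mod_cast hp) h) with h | h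
      exacts [hn h, hn' h]
    · have h0 : (n : ℚ) ≠ 0 := Int.cast_ne_zero.mpr (fun h0 => hn (h0 ▸ dvd_zero _))
      have h0' : (n' : ℚ) ≠ 0 := Int.cast_ne_zero.mpr (fun h0 => hn' (h0 ▸ dvd_zero _))
      field_simp
      push_cast
      ring
  neg_mem' := by
    rintro x ⟨m, n, hn, rfl⟩
    exact ⟨-m, n, hn, by push_cast; ring⟩
  mul_mem' := by
    rintro x y ⟨m, n, hn, rfl⟩ ⟨m', n', hn', rfl⟩
    refine ⟨m * m', n * n', fun h => ?_, ?_⟩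
    · rcases (Int.Prime.dvd_mul' (by exact_mod_cast hp) h) with h | h
      exacts [hn h, hn' h]
    · push_cast
      rw [div_mul_div_comm]


section Aux

variable (p : ℕ) (hp : p.Prime)

lemma ZLoc.den_not_dvd {x : ℚ} (hx : x ∈ ZLoc p hp) : ¬ ((p : ℤ) ∣ (x.den : ℤ)) := by
  obtain ⟨m, n, hn, rfl⟩ := hx
  intro h
  exact hn (h.trans (by rw [← Rat.divInt_eq_div]; exact Rat.den_dvd m n))

lemma ZLoc.isUnit_of_num {a : ↥(ZLoc p hp)} (h : ¬ ((p : ℤ) ∣ (a : ℚ).num)) : IsUnit a := by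
  have hden := ZLoc.den_not_dvd p hp a.2
  have hnum0 : (a : ℚ).num ≠ 0 := fun h0 => h (h0 ▸ dvd_zero _)
  have hx0 : (a : ℚ) ≠ 0 := Rat.num_ne_zero.mp hnum0
  refine IsUnit.of_mul_eq_one (a := a) ⟨(a : ℚ)⁻¹, ((a : ℚ).den : ℤ), (a : ℚ).num, h, ?_⟩ ?_
  · conv_lhs => rw [← Rat.num_div_den (a : ℚ)]
    rw [inv_div]
    norm_cast
  · exact Subtype.ext (mul_inv_cancel₀ hx0)

lemma ZLoc.localRing : IsLocalRing ↥(ZLoc p hp) := by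
  have : Nontrivial ↥(ZLoc p hp) :=
    nontrivial_of_ne 0 1 (fun h => by simpa using congrArg Subtype.val h)
  apply IsLocalRing.of_isUnit_or_isUnit_one_sub_self
  intro a
  by_cases h : (p : ℤ) ∣ (a : ℚ).num
  · right
    apply ZLoc.isUnit_of_num p hp
    intro hdvd
    have hden := ZLoc.den_not_dvd p hp a.2
    have hd0 : ((a:ℚ).den : ℤ) ≠ 0 := fun h0 => hden (h0 ▸ dvd_zero _)
    have hd0' : (((a:ℚ).den : ℕ) : ℚ) ≠ 0 := Nat.cast_ne_zero.mpr (a : ℚ).den_nz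
    have hval : ((1 - a : ↥(ZLoc p hp)) : ℚ) = (((a:ℚ).den - (a:ℚ).num : ℤ)) / ((a:ℚ).den : ℤ) := by
      push_cast
      rw [sub_div, div_self hd0', Rat.num_div_den]
    have hdvd1 : ((1 - a : ↥(ZLoc p hp)) : ℚ).num ∣ ((a:ℚ).den - (a:ℚ).num : ℤ) := by
      rw [hval, ← Rat.divInt_eq_div]
      exact Rat.num_dvd _ hd0
    have hdvd2 : (p : ℤ) ∣ ((a:ℚ).den - (a:ℚ).num : ℤ) := hdvd.trans hdvd1
    exact hden (by simpa using dvd_add hdvd2 h)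
  · left; exact ZLoc.isUnit_of_num p hp h

end Aux

theorem M2_powerSeries_ZLoc_very_clean (p : ℕ) (hp : p.Prime) (hp2 : p ≠ 2) :
    VeryCleanRing (Matrix (Fin 2) (Fin 2) (PowerSeries ↥(ZLoc p hp))) := by
  haveI : IsLocalRing ↥(ZLoc p hp) := ZLoc.localRing p hp
  have h2z : IsUnit (2 : ↥(ZLoc p hp)) := by
    apply ZLoc.isUnit_of_num p hp
    have h22 : ((2 : ↥(ZLoc p hp)) : ℚ) = 2 := by norm_cast
    rw [h22]
    have : (2 : ℚ).num = 2 := by norm_num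
    rw [this]
    intro h
    exact hp2 ((Nat.prime_dvd_prime_iff_eq hp Nat.prime_two).mp (by exact_mod_cast h))
  have h2S : IsUnit (2 : PowerSeries ↥(ZLoc p hp)) := by
    have := h2z.map (PowerSeries.C (R := ↥(ZLoc p hp)))
    rwa [map_ofNat] at this
  intro A
  have key : Matrix.det (A - 1) + Matrix.det (A + 1) - 2 * Matrix.det A = 2 := by
    simp [Matrix.det_fin_two, Matrix.sub_apply, Matrix.add_apply, Matrix.one_apply]
    ring
  by_cases h1 : IsUnit (Matrix.det A)
  · exact ⟨0, IsIdempotentElem.zero, by simp, Or.inl (by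
      simpa using (Matrix.isUnit_iff_isUnit_det A).mpr h1)⟩
  by_cases h2 : IsUnit (Matrix.det (A - 1))
  · exact ⟨1, IsIdempotentElem.one, by simp, Or.inl
      ((Matrix.isUnit_iff_isUnit_det _).mpr h2)⟩
  by_cases h3 : IsUnit (Matrix.det (A + 1))
  · exact ⟨1, IsIdempotentElem.one, by simp, Or.inr
      ((Matrix.isUnit_iff_isUnit_det _).mpr h3)⟩
  exfalso
  have hm : ∀ x : PowerSeries ↥(ZLoc p hp), ¬ IsUnit x → x ∈ IsLocalRing.maximalIdeal (PowerSeries ↥(ZLoc p hp)) := fun x hx =>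
    (IsLocalRing.mem_maximalIdeal x).mpr hx
  have : (2 : PowerSeries ↥(ZLoc p hp)) ∈ IsLocalRing.maximalIdeal (PowerSeries ↥(ZLoc p hp)) := by
    rw [← key]
    exact Ideal.sub_mem _ (Ideal.add_mem _ (hm _ h2) (hm _ h3))
      (Ideal.mul_mem_left _ 2 (hm _ h1))
  exact ((IsLocalRing.mem_maximalIdeal _).mp this) h2S
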